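/- Let F be a sensori-computational device and N ⊆ Y(F) such that every nonempty string s1 s2 … sk ∈ L(F) has first symbol s1 ∈ Y(F) \ N. If F is P_N-simulatable (there exists an SCD that output simulates F modulo the N-pump over alphabet Y(F)), then F is π_N-simulatable (there exists an SCD that output simulates F modulo the graph of the N-shrink over alphabet Y(F)). -/

import Mathlib

/-- A sensori-computational device: a finite nonempty set of states `V`,
a nonempty set `V0` of initial states, observations `Y`, a transition
labelling `tr`, and an output function `out` with nonempty values. -/
structure SCD (Y : Type) (C : Type) : Type 1 where
  V : Type
  finV : Fintype V
  V0 : Set V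
  V0_nonempty : V0.Nonempty
  tr : V → V → Set Y
  out : V → Set C
  out_nonempty : ∀ v, (out v).Nonempty

namespace SCD

variable {Y C : Type}

/-- `Traces F v s w`: string `s` reaches state `w` when traced from `v`. -/
inductive Traces (F : SCD Y C) : F.V → List Y → F.V → Prop
  | nil (v : F.V) : Traces F v [] v
  | cons {v w u : F.V} {y : Y} {s : List Y} :
      y ∈ F.tr v w → Traces F w s u → Traces F v (y :: s) u

/-- The set of states reached by `s` from some initial state. -/
def reached (F : SCD Y C) (s : List Y) : Set F.V :=
  {w | ∃ v0 ∈ F.V0, F.Traces v0 s w}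

/-- The (interaction) language of `F`. -/
def lang (F : SCD Y C) : Set (List Y) :=
  {s | (F.reached s).Nonempty}

/-- The set of outputs of all states reached by `s`. -/
def outs (F : SCD Y C) (s : List Y) : Set C :=
  ⋃ v ∈ F.reached s, F.out v

end SCD

/-- `F'` output simulates `F` modulo the relation `R`. -/
def OutSim {A B C : Type} (F : SCD A C) (F' : SCD B C)
    (R : List A → List B → Prop) : Prop :=
  ∀ s ∈ F.lang,
    (∃ t, R s t) ∧ ∀ t, R s t → t ∈ F'.lang ∧ F'.outs t ⊆ F.outs s

/-- `F` is `R`-simulatable: some device output simulates `F` modulo `R`. -/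
def Simulatable {A B C : Type} (F : SCD A C)
    (R : List A → List B → Prop) : Prop :=
  ∃ F' : SCD B C, OutSim F F' R

/-- Composition of relations (on strings), `R ⨟ S`. -/
def relComp {α β γ : Type*} (R : α → β → Prop) (S : β → γ → Prop) :
    α → γ → Prop :=
  fun a c => ∃ b, R a b ∧ S b c
/-- The `N`-pump: the smallest relation with `ε P ε`, `s P s`, and closed
under inserting a symbol `b ∈ N` at any position except before the first
symbol. -/
inductive Pump {A : Type} (N : Set A) : List A → List A → Prop
  | refl (s : List A) : Pump N s s
  | insert {s t1 t2 : List A} {b : A} :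
      b ∈ N → Pump N s (t1 ++ t2) → t1 ≠ [] → Pump N s (t1 ++ b :: t2)

open Classical in
/-- The `N`-shrink: delete all occurrences of symbols in `N`. -/
noncomputable def shrink {A : Type} (N : Set A) : List A → List A
  | [] => []
  | a :: s => if a ∈ N then shrink N s else a :: shrink N s

/-- The `N`-shrink, as a relation (graph of the function). -/
def shrinkRel {A : Type} (N : Set A) : List A → List A → Prop :=
  fun s t => t = shrink N s

section Aux

variable {Y C : Type}

namespace SCD

/-- One-step successor set. -/
def step (F : SCD Y C) (y : Y) (A : Set F.V) : Set F.V :=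
  {w | ∃ v ∈ A, y ∈ F.tr v w}

/-- Iterated successor set. -/
def steps (F : SCD Y C) : List Y → Set F.V → Set F.V
  | [], A => A
  | y :: s, A => F.steps s (F.step y A)

@[simp] lemma steps_nil (F : SCD Y C) (A : Set F.V) : F.steps [] A = A := rfl

@[simp] lemma steps_cons (F : SCD Y C) (y : Y) (s : List Y) (A : Set F.V) :
    F.steps (y :: s) A = F.steps s (F.step y A) := rfl

lemma steps_append (F : SCD Y C) (s t : List Y) (A : Set F.V) :
    F.steps (s ++ t) A = F.steps t (F.steps s A) := by
  induction s generalizing A with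
  | nil => rfl
  | cons y s ih => simp [ih]

@[simp] lemma step_empty (F : SCD Y C) (y : Y) : F.step y (∅ : Set F.V) = ∅ := by
  ext w; simp [step]

@[simp] lemma steps_empty (F : SCD Y C) (s : List Y) : F.steps s (∅ : Set F.V) = ∅ := by
  induction s with
  | nil => rfl
  | cons y s ih => simp [ih]

lemma mem_steps (F : SCD Y C) : ∀ (s : List Y) (A : Set F.V) (w : F.V),
    w ∈ F.steps s A ↔ ∃ v ∈ A, F.Traces v s w := by
  intro s
  induction s with
  | nil =>
    intro A w
    constructor
    · intro hw; exact ⟨w, hw, Traces.nil w⟩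
    · rintro ⟨v, hv, ht⟩; cases ht; exact hv
  | cons y s ih =>
    intro A w
    simp only [steps_cons, ih]
    constructor
    · rintro ⟨v', ⟨v, hv, hyv⟩, ht⟩
      exact ⟨v, hv, Traces.cons hyv ht⟩
    · rintro ⟨v, hv, ht⟩
      cases ht with
      | cons hyv ht' => exact ⟨_, ⟨v, hv, hyv⟩, ht'⟩

lemma reached_eq (F : SCD Y C) (s : List Y) : F.reached s = F.steps s F.V0 := by
  ext w; rw [mem_steps]; rfl

lemma outs_eq (F : SCD Y C) (s : List Y) :
    F.outs s = ⋃ v ∈ F.steps s F.V0, F.out v := by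
  rw [outs, reached_eq]

lemma nil_mem_lang (F : SCD Y C) : ([] : List Y) ∈ F.lang := by
  obtain ⟨v0, hv0⟩ := F.V0_nonempty
  exact ⟨v0, v0, hv0, Traces.nil v0⟩

end SCD

/-! ### shrink lemmas -/

variable {A : Type} {N : Set A}

@[simp] lemma shrink_nil : shrink N ([] : List A) = [] := rfl

lemma shrink_cons_of_mem {a : A} (h : a ∈ N) (s : List A) :
    shrink N (a :: s) = shrink N s := by
  simp [shrink, h]

lemma shrink_cons_of_not_mem {a : A} (h : a ∉ N) (s : List A) :
    shrink N (a :: s) = a :: shrink N s := by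
  simp [shrink, h]

lemma shrink_append (s t : List A) :
    shrink N (s ++ t) = shrink N s ++ shrink N t := by
  induction s with
  | nil => simp
  | cons a s ih =>
    by_cases h : a ∈ N
    · simp [shrink_cons_of_mem h, ih]
    · simp [shrink_cons_of_not_mem h, ih]

lemma shrink_eq_nil_of_forall (s : List A) (h : ∀ b ∈ s, b ∈ N) :
    shrink N s = [] := by
  induction s with
  | nil => rfl
  | cons a s ih =>
    rw [shrink_cons_of_mem (h a (by simp))]
    exact ih fun b hb => h b (by simp [hb])

lemma forall_mem_of_shrink_eq_nil : ∀ (s : List A), shrink N s = [] → ∀ b ∈ s, b ∈ N := by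
  intro s
  induction s with
  | nil => simp
  | cons a s ih =>
    intro h b hb
    by_cases ha : a ∈ N
    · rw [shrink_cons_of_mem ha] at h
      rcases List.mem_cons.1 hb with rfl | hb'
      · exact ha
      · exact ih h b hb'
    · rw [shrink_cons_of_not_mem ha] at h
      simp at h

lemma not_mem_of_mem_shrink : ∀ (s : List A) (y : A), y ∈ shrink N s → y ∉ N := by
  intro s
  induction s with
  | nil => simp
  | cons a s ih =>
    intro y hy
    by_cases ha : a ∈ N
    · rw [shrink_cons_of_mem ha] at hy; exact ih y hy
    · rw [shrink_cons_of_not_mem ha] at hy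
      rcases List.mem_cons.1 hy with rfl | hy'
      · exact ha
      · exact ih y hy'

lemma shrink_of_forall_not_mem (s : List A) (h : ∀ y ∈ s, y ∉ N) :
    shrink N s = s := by
  induction s with
  | nil => rfl
  | cons a s ih =>
    rw [shrink_cons_of_not_mem (h a (by simp))]
    rw [ih fun y hy => h y (by simp [hy])]

/-- Decomposition: if the shrink of `s` ends with `a ∉ N`, then `s` splits as
`p ++ a :: w` with `w` all in `N` and `shrink p` the rest. -/
lemma shrink_decomp {a : A} (ha : a ∉ N) :
    ∀ (s t : List A), shrink N s = t ++ [a] →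
      ∃ p w, s = p ++ a :: w ∧ shrink N p = t ∧ ∀ b ∈ w, b ∈ N := by
  intro s
  induction s using List.reverseRecOn with
  | nil => intro t h; simp at h
  | append_singleton s b ih =>
    intro t h
    by_cases hb : b ∈ N
    · rw [shrink_append, shrink_cons_of_mem hb, shrink_nil, List.append_nil] at h
      obtain ⟨p, w, h1, h2, h3⟩ := ih t h
      refine ⟨p, w ++ [b], by simp [h1], h2, ?_⟩
      intro c hc
      rcases List.mem_append.1 hc with hc | hc
      · exact h3 c hc
      · simp at hc; subst hc; exact hb
    · rw [shrink_append, shrink_cons_of_not_mem hb, shrink_nil] at h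
      have hba : b = a ∧ shrink N s = t := by
        have := List.append_inj' h rfl
        exact ⟨by simpa using this.2, this.1⟩
      exact ⟨s, [], by simp [hba.1], hba.2, by simp⟩

/-! ### Insertion relation -/

/-- `Ins N s u`: `u` is obtained from `s` by inserting symbols of `N` anywhere. -/
inductive Ins (N : Set A) : List A → List A → Prop
  | nil : Ins N [] []
  | keep (a : A) {s u : List A} : Ins N s u → Ins N (a :: s) (a :: u)
  | ins {b : A} {s u : List A} (hb : b ∈ N) : Ins N s u → Ins N s (b :: u)

lemma Ins.refl : ∀ (s : List A), Ins N s s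
  | [] => Ins.nil
  | a :: s => Ins.keep a (Ins.refl s)

lemma Ins.of_forall (u : List A) (h : ∀ b ∈ u, b ∈ N) : Ins N [] u := by
  induction u with
  | nil => exact Ins.nil
  | cons b u ih =>
    exact Ins.ins (h b (by simp)) (ih fun c hc => h c (by simp [hc]))

/-- Two strings with equal shrinks have a common `N`-insertion extension. -/
lemma ins_join : ∀ (s s' : List A), shrink N s = shrink N s' →
    ∃ u, Ins N s u ∧ Ins N s' u
  | [], s', h => by
    refine ⟨s', ?_, Ins.refl s'⟩
    exact Ins.of_forall s' (forall_mem_of_shrink_eq_nil s' h.symm)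
  | a :: v, [], h => by
    refine ⟨a :: v, Ins.refl _, ?_⟩
    exact Ins.of_forall _ (forall_mem_of_shrink_eq_nil _ h)
  | a :: v, b :: v', h => by
    by_cases ha : a ∈ N
    · rw [shrink_cons_of_mem ha] at h
      obtain ⟨u0, h1, h2⟩ := ins_join v (b :: v') h
      exact ⟨a :: u0, Ins.keep a h1, Ins.ins ha h2⟩
    · by_cases hb : b ∈ N
      · rw [shrink_cons_of_mem hb] at h
        obtain ⟨u0, h1, h2⟩ := ins_join (a :: v) v' h
        exact ⟨b :: u0, Ins.ins hb h1, Ins.keep b h2⟩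
      · rw [shrink_cons_of_not_mem ha, shrink_cons_of_not_mem hb] at h
        injection h with hab h'
        subst hab
        obtain ⟨u0, h1, h2⟩ := ins_join v v' h'
        exact ⟨a :: u0, Ins.keep a h1, Ins.keep a h2⟩
  termination_by s s' _ => s.length + s'.length

/-! ### Pump lemmas -/

lemma Pump.trans {s u w : List A} (h1 : Pump N s u) (h2 : Pump N u w) :
    Pump N s w := by
  induction h2 with
  | refl => exact h1
  | insert hb _ hne ih => exact Pump.insert hb ih hne

lemma Pump.shrink_eq {s u : List A} (h : Pump N s u) :
    shrink N u = shrink N s := by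
  induction h with
  | refl => rfl
  | insert hb _ _ ih =>
    rw [shrink_append, shrink_cons_of_mem hb, ← shrink_append, ih]

lemma Pump.head?_eq {s u : List A} (h : Pump N s u) : u.head? = s.head? := by
  induction h with
  | refl => rfl
  | @insert t1 t2 b _ _ hne ih =>
    cases t1 with
    | nil => exact absurd rfl hne
    | cons x t1' => simpa using ih

lemma pump_of_ins {s u : List A} (h : Ins N s u) :
    ∀ (x : List A), x ≠ [] → Pump N (x ++ s) (x ++ u) := by
  induction h with
  | nil => intro x _; simpa using Pump.refl x
  | @keep a s u h ih =>
    intro x hx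
    have := ih (x ++ [a]) (by simp)
    simpa using this
  | @ins b s u hb h ih =>
    intro x hx
    exact Pump.insert hb (ih x hx) hx

/-- A finite family of strings, each with head outside `N` and all shrinking
to the `N`-free string `t`, has a common pump. -/
lemma common_pump (t : List A) (ht : ∀ y ∈ t, y ∉ N) :
    ∀ (l : List (List A)),
      (∀ p ∈ l, ∀ a : A, p.head? = some a → a ∉ N) →
      (∀ p ∈ l, shrink N p = t) →
      ∃ u, (∀ p ∈ l, Pump N p u) ∧ shrink N u = t ∧
        (∀ a : A, u.head? = some a → a ∉ N) := by
  intro l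
  induction l with
  | nil =>
    intro _ _
    refine ⟨t, by simp, shrink_of_forall_not_mem t ht, ?_⟩
    intro a ha
    exact ht a (by cases t <;> simp_all)
  | cons p l ih =>
    intro hhead hsh
    obtain ⟨u', hu'1, hu'2, hu'3⟩ := ih (fun q hq => hhead q (by simp [hq]))
      (fun q hq => hsh q (by simp [hq]))
    have hps : shrink N p = shrink N u' := by
      rw [hsh p (by simp), hu'2]
    -- join p and u'
    have hjoin : ∃ u, Pump N p u ∧ Pump N u' u := by
      cases p with
      | nil =>
        have : u' = [] := by
          cases u' with
          | nil => rfl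
          | cons b v' =>
            by_cases hb : b ∈ N
            · exact absurd hb (hu'3 b rfl)
            · rw [shrink_cons_of_not_mem hb] at hps; simp at hps
        subst this
        exact ⟨[], Pump.refl [], Pump.refl []⟩
      | cons a v =>
        have ha : a ∉ N := hhead (a :: v) (by simp) a rfl
        cases u' with
        | nil =>
          rw [shrink_cons_of_not_mem ha] at hps; simp at hps
        | cons b v' =>
          have hb : b ∉ N := hu'3 b rfl
          rw [shrink_cons_of_not_mem ha, shrink_cons_of_not_mem hb] at hps
          obtain ⟨rfl, hvv⟩ : a = b ∧ shrink N v = shrink N v' := by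
            constructor
            · exact (List.cons.injEq .. ▸ hps).1
            · exact (List.cons.injEq .. ▸ hps).2
          obtain ⟨w, hw1, hw2⟩ := ins_join v v' hvv
          exact ⟨a :: w, pump_of_ins hw1 [a] (by simp),
            pump_of_ins hw2 [a] (by simp)⟩
    obtain ⟨u, hpu, hu'u⟩ := hjoin
    refine ⟨u, ?_, ?_, ?_⟩
    · intro q hq
      rcases List.mem_cons.1 hq with rfl | hq'
      · exact hpu
      · exact Pump.trans (hu'1 q hq') hu'u
    · rw [Pump.shrink_eq hpu, hsh p (by simp)]
    · intro a ha
      rw [Pump.head?_eq hpu] at ha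
      exact hhead p (by simp) a ha

end Aux

section Construction

variable {Y C : Type}

/-- Collection transition for the simulating device. -/
def dlt (F : SCD Y C) (N : Set Y) (y : Y) (R : Set (Set F.V)) : Set (Set F.V) :=
  {B | B.Nonempty ∧ ∃ A ∈ R, ∃ w : List Y, (∀ b ∈ w, b ∈ N) ∧
    B = F.steps w (F.step y A)}

/-- Iterated collection transition. -/
def dstar (F : SCD Y C) (N : Set Y) : List Y → Set (Set F.V) → Set (Set F.V)
  | [], R => R
  | y :: t, R => dstar F N t (dlt F N y R)

@[simp] lemma dstar_nil (F : SCD Y C) (N : Set Y) (R : Set (Set F.V)) :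
    dstar F N [] R = R := rfl

@[simp] lemma dstar_cons (F : SCD Y C) (N : Set Y) (y : Y) (t : List Y)
    (R : Set (Set F.V)) : dstar F N (y :: t) R = dstar F N t (dlt F N y R) := rfl

lemma dstar_append (F : SCD Y C) (N : Set Y) (s t : List Y) (R : Set (Set F.V)) :
    dstar F N (s ++ t) R = dstar F N t (dstar F N s R) := by
  induction s generalizing R with
  | nil => rfl
  | cons y s ih => simp [ih]

/-- The collection of reach-sets of all strings in the language shrinking to `t`. -/
def Rcoll (F : SCD Y C) (N : Set Y) (t : List Y) : Set (Set F.V) :=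
  {B | ∃ s, shrink N s = t ∧ s ∈ F.lang ∧ B = F.steps s F.V0}

/-- Outputs of a set of states. -/
def outOf (F : SCD Y C) (B : Set F.V) : Set C := ⋃ v ∈ B, F.out v

open Classical in
/-- The simulating device. -/
noncomputable def simF (F : SCD Y C) (N : Set Y) : SCD Y C where
  V := Set (Set F.V)
  finV := haveI := F.finV; Fintype.ofFinite _
  V0 := {{F.V0}}
  V0_nonempty := ⟨{F.V0}, rfl⟩
  tr := fun R R' => {y | R' = dlt F N y R}
  out := fun R =>
    if h : (⋂ B ∈ R, outOf F B).Nonempty then ⋂ B ∈ R, outOf F B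
    else {(F.out_nonempty F.V0_nonempty.choose).choose}
  out_nonempty := fun R => by
    split
    · assumption
    · exact Set.singleton_nonempty _

lemma simF_traces (F : SCD Y C) (N : Set Y) :
    ∀ (t : List Y) (R R' : (simF F N).V),
      (simF F N).Traces R t R' ↔ R' = dstar F N t R := by
  intro t
  induction t with
  | nil =>
    intro R R'
    constructor
    · intro h; cases h; rfl
    · intro h; rw [h]; exact SCD.Traces.nil R
  | cons y t ih =>
    intro R R'
    constructor
    · intro h
      cases h with
      | cons hy htr =>
        have : _ = dlt F N y R := hy
        change R' = dstar F N t (dlt F N y R)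
        rw [← this]
        exact (ih _ _).1 htr
    · intro h
      refine SCD.Traces.cons (w := dlt F N y R) ?_ ((ih _ _).2 ?_)
      · show dlt F N y R = dlt F N y R
        rfl
      · exact h

lemma simF_reached (F : SCD Y C) (N : Set Y) (t : List Y) :
    (simF F N).reached t = ({dstar F N t {F.V0}} : Set (Set (Set F.V))) := by
  ext R'
  simp only [SCD.reached, Set.mem_setOf_eq, Set.mem_singleton_iff]
  constructor
  · rintro ⟨R0, hR0, htr⟩
    have hR0' : R0 = ({F.V0} : Set (Set F.V)) := hR0
    subst hR0'
    exact (simF_traces F N t _ _).1 htr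
  · intro h
    exact ⟨({F.V0} : Set (Set F.V)), rfl, (simF_traces F N t _ _).2 h⟩

/-- Key invariant: on `N`-free strings, `dstar` computes the collection of
reach-sets of shrink-preimages. -/
lemma dstar_key (F : SCD Y C) (N : Set Y)
    (hfirst : ∀ s ∈ F.lang, ∀ a : Y, s.head? = some a → a ∉ N) :
    ∀ t : List Y, (∀ y ∈ t, y ∉ N) →
      dstar F N t {F.V0} = Rcoll F N t := by
  intro t
  induction t using List.reverseRecOn with
  | nil =>
    intro _
    ext B
    simp only [dstar_nil, Set.mem_singleton_iff, Rcoll, Set.mem_setOf_eq]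
    constructor
    · rintro rfl
      exact ⟨[], rfl, F.nil_mem_lang, rfl⟩
    · rintro ⟨s, hsh, hlang, rfl⟩
      cases s with
      | nil => rfl
      | cons a s' =>
        have ha : a ∉ N := hfirst _ hlang a rfl
        rw [shrink_cons_of_not_mem ha] at hsh
        simp at hsh
  | append_singleton t a ih =>
    intro hfree
    have ha : a ∉ N := hfree a (by simp)
    have htf : ∀ y ∈ t, y ∉ N := fun y hy => hfree y (by simp [hy])
    rw [dstar_append, ih htf]
    ext B
    simp only [dstar_cons, dstar_nil, dlt, Set.mem_setOf_eq, Rcoll]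
    constructor
    · rintro ⟨hBne, A, ⟨p, hp1, hp2, rfl⟩, w, hw, rfl⟩
      refine ⟨p ++ a :: w, ?_, ?_, ?_⟩
      · rw [shrink_append, hp1, shrink_cons_of_not_mem ha,
          shrink_eq_nil_of_forall w hw]
      · rw [SCD.lang, Set.mem_setOf_eq, F.reached_eq, F.steps_append]
        simpa using hBne
      · rw [F.steps_append]; simp
    · rintro ⟨s, hsh, hlang, rfl⟩
      obtain ⟨p, w, rfl, hp, hw⟩ := shrink_decomp ha s t hsh
      have hBne : (F.steps (p ++ a :: w) F.V0).Nonempty := by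
        rw [← F.reached_eq]; exact hlang
      have hpne : (F.steps p F.V0).Nonempty := by
        by_contra hc
        rw [Set.not_nonempty_iff_eq_empty] at hc
        rw [F.steps_append, hc] at hBne
        simp at hBne
      refine ⟨hBne, F.steps p F.V0, ⟨p, hp, ?_, rfl⟩, w, hw, ?_⟩
      · rw [SCD.lang, Set.mem_setOf_eq, F.reached_eq]; exact hpne
      · rw [F.steps_append]; simp

end Construction

/-- if every nonempty string of `L(F)` starts with a symbol
outside `N`, then `F` being `P_N`-simulatable implies `F` is
`π_N`-simulatable. -/
theorem stmt12 {Y C : Type} (F : SCD Y C) (N : Set Y)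
    (hfirst : ∀ s ∈ F.lang, ∀ a : Y, s.head? = some a → a ∉ N)
    (h : Simulatable F (Pump N)) :
    Simulatable F (shrinkRel N) := by
  classical
  obtain ⟨F', hsim⟩ := h
  refine ⟨simF F N, ?_⟩
  intro s hs
  refine ⟨⟨shrink N s, rfl⟩, ?_⟩
  rintro t (rfl : t = shrink N s)
  set t := shrink N s with htdef
  have htfree : ∀ y ∈ t, y ∉ N := fun y hy => not_mem_of_mem_shrink s y hy
  haveI := F.finV
  -- representatives of the collection
  have hfin : (Rcoll F N t).Finite := Set.toFinite _
  set σ : Set F.V → List Y := fun B =>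
    if hB : B ∈ Rcoll F N t then hB.choose else [] with hσdef
  have hσ : ∀ B ∈ Rcoll F N t,
      shrink N (σ B) = t ∧ σ B ∈ F.lang ∧ B = F.steps (σ B) F.V0 := by
    intro B hB
    have hspec := hB.choose_spec
    simp only [hσdef, dif_pos hB]
    exact hspec
  set l : List (List Y) := s :: (hfin.toFinset.toList.map σ) with hldef
  have hlmem : ∀ q ∈ l, shrink N q = t ∧ q ∈ F.lang := by
    intro q hq
    rcases List.mem_cons.1 hq with rfl | hq'
    · exact ⟨rfl, hs⟩
    · obtain ⟨B, hB, rfl⟩ := List.mem_map.1 hq'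
      have hB' : B ∈ Rcoll F N t := hfin.mem_toFinset.1 (Finset.mem_toList.1 hB)
      exact ⟨(hσ B hB').1, (hσ B hB').2.1⟩
  obtain ⟨u, hu, -, -⟩ := common_pump t htfree l
    (fun p hp a ha => hfirst p (hlmem p hp).2 a ha)
    (fun p hp => (hlmem p hp).1)
  have hPsu : Pump N s u := hu s (by simp [hldef])
  have hul := (hsim s hs).2 u hPsu
  obtain ⟨v', hv'⟩ := hul.1
  obtain ⟨c, hc⟩ := F'.out_nonempty v'
  have hcu : c ∈ F'.outs u := by
    exact Set.mem_biUnion hv' hc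
  have hcI : c ∈ ⋂ B ∈ Rcoll F N t, outOf F B := by
    refine Set.mem_iInter₂.2 fun B hB => ?_
    have hBl : σ B ∈ l := by
      simp only [hldef, List.mem_cons, List.mem_map]
      exact Or.inr ⟨B, Finset.mem_toList.2 (hfin.mem_toFinset.2 hB), rfl⟩
    have hPu : Pump N (σ B) u := hu _ hBl
    have hcB : c ∈ F.outs (σ B) := ((hsim (σ B) (hσ B hB).2.1).2 u hPu).2 hcu
    rw [F.outs_eq, ← (hσ B hB).2.2] at hcB
    exact hcB
  have hIne : (⋂ B ∈ Rcoll F N t, outOf F B).Nonempty := ⟨c, hcI⟩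
  have hR : dstar F N t {F.V0} = Rcoll F N t := dstar_key F N hfirst t htfree
  constructor
  · -- t ∈ (simF F N).lang
    rw [SCD.lang, Set.mem_setOf_eq, simF_reached]
    exact ⟨_, rfl⟩
  · -- outputs inclusion
    intro c' hc'
    rw [SCD.outs, simF_reached] at hc'
    obtain ⟨R0, hR0, hc'⟩ := Set.mem_iUnion₂.1 hc'
    rw [show R0 = dstar F N t {F.V0} from hR0] at hc'
    rw [hR] at hc'
    have hout : (simF F N).out (Rcoll F N t) = ⋂ B ∈ Rcoll F N t, outOf F B := by
      simp only [simF, dif_pos hIne]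
    rw [hout] at hc'
    have hmem : F.steps s F.V0 ∈ Rcoll F N t := ⟨s, rfl, hs, rfl⟩
    have := Set.mem_iInter₂.1 hc' _ hmem
    rw [F.outs_eq]
    exact this
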